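/- Let P_X be a probability density on symmetric N×N matrices invariant under conjugation by orthogonal matrices, P_Y and P_W probability densities on N×M matrices invariant under left and right multiplication by orthogonal matrices. Then the posterior mean estimator X̂*(S) = E[X | S] for the model S = X·Y + W satisfies X̂*(U·S·Vᵀ) = U·X̂*(S)·Uᵀ for all U ∈ O(N), V ∈ O(M); in other words the Bayes estimator of X is a rotation invariant estimator (its eigenvectors coincide with the left singular vectors of S). -/

import Mathlib

open Matrix MeasureTheory

namespace RIEAux


lemma mp_mulVec {n : ℕ} {C : Matrix (Fin n) (Fin n) ℝ} (h : |C.det| = 1) :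
    MeasurePreserving (fun v : Fin n → ℝ => C.mulVec v) volume volume := by
  have hdet : C.det ≠ 0 := fun h0 => by simp [h0] at h
  have hfun : (fun v : Fin n → ℝ => C.mulVec v) = ⇑(Matrix.toLin' C) := by
    funext v; simp [Matrix.toLin'_apply]
  constructor
  · rw [hfun]; exact (Matrix.toLin' C).continuous_of_finiteDimensional.measurable
  · rw [hfun, Real.map_matrix_volume_pi_eq_smul_volume_pi hdet, abs_inv, h, inv_one,
      ENNReal.ofReal_one, one_smul]

lemma abs_det_eq_one_of_mp {a b : ℕ} (e : (Fin a → Fin b → ℝ) ≃ₗ[ℝ] (Fin a → Fin b → ℝ))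
    (h : MeasurePreserving (⇑e) volume volume) :
    |LinearMap.det (e.toLinearMap)| = 1 := by
  have hdet : LinearMap.det e.toLinearMap ≠ 0 := e.isUnit_det'.ne_zero
  have h1 := Measure.map_linearMap_addHaar_eq_smul_addHaar
    (volume : Measure (Fin a → Fin b → ℝ)) hdet
  have h2 : ENNReal.ofReal |(LinearMap.det e.toLinearMap)⁻¹| • (volume : Measure (Fin a → Fin b → ℝ))
      = volume := by
    rw [← h1]
    exact h.map_eq
  set s : Set (Fin a → Fin b → ℝ) :=
    Set.univ.pi fun _ => Set.univ.pi fun _ => Set.Icc (0:ℝ) 1 with hs_def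
  have hs : volume s = 1 := by
    rw [hs_def, volume_pi_pi]
    simp [Real.volume_Icc_pi, Real.volume_Icc]
  have h3 : ENNReal.ofReal |(LinearMap.det e.toLinearMap)⁻¹| = 1 := by
    have := congrArg (fun μ : Measure (Fin a → Fin b → ℝ) => μ s) h2
    simpa [hs] using this
  have h4 : |(LinearMap.det e.toLinearMap)⁻¹| = 1 := by
    rwa [ENNReal.ofReal_eq_one] at h3
  rwa [abs_inv, inv_eq_one] at h4

lemma mp_of_abs_det_eq_one {a b : ℕ} (e : (Fin a → Fin b → ℝ) ≃ₗ[ℝ] (Fin a → Fin b → ℝ))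
    (h : |LinearMap.det (e.toLinearMap)| = 1) :
    MeasurePreserving (⇑e) volume volume := by
  have hdet : LinearMap.det e.toLinearMap ≠ 0 := e.isUnit_det'.ne_zero
  constructor
  · exact e.toLinearMap.continuous_of_finiteDimensional.measurable
  · have h1 := Measure.map_linearMap_addHaar_eq_smul_addHaar
      (volume : Measure (Fin a → Fin b → ℝ)) hdet
    show Measure.map (⇑e.toLinearMap) volume = volume
    rw [h1, abs_inv, h, inv_one, ENNReal.ofReal_one, one_smul]


noncomputable def transposeLinEquiv (n m : ℕ) : (Fin n → Fin m → ℝ) ≃ₗ[ℝ] (Fin m → Fin n → ℝ) where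
  toFun x := fun j i => x i j
  invFun x := fun i j => x j i
  map_add' _ _ := rfl
  map_smul' _ _ := rfl
  left_inv _ := rfl
  right_inv _ := rfl

noncomputable def rmulLinEquiv {n m : ℕ} (C D : Matrix (Fin m) (Fin m) ℝ) (hCD : C * D = 1) (hDC : D * C = 1) :
    (Fin n → Fin m → ℝ) ≃ₗ[ℝ] (Fin n → Fin m → ℝ) where
  toFun x := fun i => Cᵀ.mulVec (x i)
  invFun x := fun i => Dᵀ.mulVec (x i)
  map_add' x y := by funext i; exact Matrix.mulVec_add _ _ _
  map_smul' c x := by funext i; simp [Matrix.mulVec_smul]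
  left_inv x := by
    funext i
    show Dᵀ *ᵥ (Cᵀ *ᵥ x i) = x i
    rw [Matrix.mulVec_mulVec, ← Matrix.transpose_mul, hCD, Matrix.transpose_one,
      Matrix.one_mulVec]
  right_inv x := by
    funext i
    show Cᵀ *ᵥ (Dᵀ *ᵥ x i) = x i
    rw [Matrix.mulVec_mulVec, ← Matrix.transpose_mul, hDC, Matrix.transpose_one,
      Matrix.one_mulVec]

lemma rmulLinEquiv_apply {n m : ℕ} (C D : Matrix (Fin m) (Fin m) ℝ) (hCD : C * D = 1)
    (hDC : D * C = 1) (x : Fin n → Fin m → ℝ) :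
    Matrix.of (rmulLinEquiv (n := n) C D hCD hDC x) = Matrix.of x * C := by
  ext i j
  simp [rmulLinEquiv, Matrix.mulVec, Matrix.mul_apply, dotProduct, mul_comm]

lemma mp_rmul {n m : ℕ} (C D : Matrix (Fin m) (Fin m) ℝ) (hCD : C * D = 1) (hDC : D * C = 1)
    (h : |C.det| = 1) :
    MeasurePreserving (⇑(rmulLinEquiv (n := n) C D hCD hDC)) volume volume := by
  have : ⇑(rmulLinEquiv (n := n) C D hCD hDC)
      = fun (a : Fin n → Fin m → ℝ) i => Cᵀ.mulVec (a i) := rfl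
  rw [this]
  exact volume_preserving_pi (fun _ => mp_mulVec (by rwa [Matrix.det_transpose]))


noncomputable def lmulLinEquiv {n m : ℕ} (A B : Matrix (Fin n) (Fin n) ℝ)
    (hAB : A * B = 1) (hBA : B * A = 1) :
    (Fin n → Fin m → ℝ) ≃ₗ[ℝ] (Fin n → Fin m → ℝ) :=
  (transposeLinEquiv n m).trans
    ((rmulLinEquiv Aᵀ Bᵀ (by rw [← Matrix.transpose_mul, hBA, Matrix.transpose_one])
        (by rw [← Matrix.transpose_mul, hAB, Matrix.transpose_one])).trans
      (transposeLinEquiv n m).symm)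

lemma lmulLinEquiv_apply {n m : ℕ} (A B : Matrix (Fin n) (Fin n) ℝ)
    (hAB : A * B = 1) (hBA : B * A = 1) (x : Fin n → Fin m → ℝ) :
    Matrix.of (lmulLinEquiv (m := m) A B hAB hBA x) = A * Matrix.of x := by
  ext i j
  simp [lmulLinEquiv, transposeLinEquiv, rmulLinEquiv, Matrix.mulVec, dotProduct,
    Matrix.mul_apply]

lemma mp_lmul {n m : ℕ} (A B : Matrix (Fin n) (Fin n) ℝ) (hAB : A * B = 1) (hBA : B * A = 1)
    (h : |A.det| = 1) :
    MeasurePreserving (⇑(lmulLinEquiv (m := m) A B hAB hBA)) volume volume := by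
  have h1 : Aᵀ * Bᵀ = 1 := by rw [← Matrix.transpose_mul, hBA, Matrix.transpose_one]
  have h2 : Bᵀ * Aᵀ = 1 := by rw [← Matrix.transpose_mul, hAB, Matrix.transpose_one]
  apply mp_of_abs_det_eq_one
  have key : LinearMap.det (lmulLinEquiv (m := m) A B hAB hBA).toLinearMap
      = LinearMap.det (rmulLinEquiv (n := m) Aᵀ Bᵀ h1 h2).toLinearMap := by
    rw [← LinearMap.det_conj (rmulLinEquiv (n := m) Aᵀ Bᵀ h1 h2).toLinearMap
      (transposeLinEquiv n m).symm]
    congr 1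
  rw [key]
  exact abs_det_eq_one_of_mp _ (mp_rmul Aᵀ Bᵀ h1 h2 (by rwa [Matrix.det_transpose]))

end RIEAux

/-- For the model `S = X·Y + W` with rotation invariant prior `pX` on symmetric
`N×N` matrices and bi-rotation invariant priors `pY, pW` on `N×M` matrices, the
posterior mean estimator `X̂*(S) = E[X|S]` (given entrywise by Bayes integrals
over the matrix entries, with Lebesgue reference measure) is equivariant:
`X̂*(U S Vᵀ) = U X̂*(S) Uᵀ` for all orthogonal `U, V`; hence it is a rotation
invariant estimator. -/
theorem posterior_mean_X_is_RIE (N M : ℕ)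
    (pX : Matrix (Fin N) (Fin N) ℝ → ℝ)
    (pY pW : Matrix (Fin N) (Fin M) ℝ → ℝ)
    (hpXsym : ∀ X, pX X ≠ 0 → X = Xᵀ)
    (hpX : ∀ (O : Matrix (Fin N) (Fin N) ℝ), O * Oᵀ = 1 → Oᵀ * O = 1 →
      ∀ X, pX (O * X * Oᵀ) = pX X)
    (hpY : ∀ (U : Matrix (Fin N) (Fin N) ℝ) (V : Matrix (Fin M) (Fin M) ℝ),
      U * Uᵀ = 1 → Uᵀ * U = 1 → V * Vᵀ = 1 → Vᵀ * V = 1 →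
      ∀ Y, pY (U * Y * Vᵀ) = pY Y)
    (hpW : ∀ (U : Matrix (Fin N) (Fin N) ℝ) (V : Matrix (Fin M) (Fin M) ℝ),
      U * Uᵀ = 1 → Uᵀ * U = 1 → V * Vᵀ = 1 → Vᵀ * V = 1 →
      ∀ W, pW (U * W * Vᵀ) = pW W)
    -- the Bayes integrals are assumed finite (integrable integrands):
    (hInt0 : ∀ S : Matrix (Fin N) (Fin M) ℝ,
      Integrable (fun p : (Fin N → Fin N → ℝ) × (Fin N → Fin M → ℝ) =>
        pX (Matrix.of p.1) * pY (Matrix.of p.2) *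
          pW (S - Matrix.of p.1 * Matrix.of p.2)))
    (hInt1 : ∀ (S : Matrix (Fin N) (Fin M) ℝ) (i j : Fin N),
      Integrable (fun p : (Fin N → Fin N → ℝ) × (Fin N → Fin M → ℝ) =>
        pX (Matrix.of p.1) * pY (Matrix.of p.2) *
          pW (S - Matrix.of p.1 * Matrix.of p.2) * p.1 i j))
    -- the normalization (denominator) is nonzero:
    (hDen : ∀ S : Matrix (Fin N) (Fin M) ℝ,
      (∫ p : (Fin N → Fin N → ℝ) × (Fin N → Fin M → ℝ),
        pX (Matrix.of p.1) * pY (Matrix.of p.2) *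
          pW (S - Matrix.of p.1 * Matrix.of p.2)) ≠ 0)
    -- the posterior mean estimator:
    (Xhat : Matrix (Fin N) (Fin M) ℝ → Matrix (Fin N) (Fin N) ℝ)
    (hXhat : ∀ (S : Matrix (Fin N) (Fin M) ℝ) (i j : Fin N),
      Xhat S i j =
        (∫ p : (Fin N → Fin N → ℝ) × (Fin N → Fin M → ℝ),
          pX (Matrix.of p.1) * pY (Matrix.of p.2) *
            pW (S - Matrix.of p.1 * Matrix.of p.2) * p.1 i j) /
        (∫ p : (Fin N → Fin N → ℝ) × (Fin N → Fin M → ℝ),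
          pX (Matrix.of p.1) * pY (Matrix.of p.2) *
            pW (S - Matrix.of p.1 * Matrix.of p.2))) :
    ∀ (U : Matrix (Fin N) (Fin N) ℝ) (V : Matrix (Fin M) (Fin M) ℝ)
      (S : Matrix (Fin N) (Fin M) ℝ),
      U * Uᵀ = 1 → Uᵀ * U = 1 → V * Vᵀ = 1 → Vᵀ * V = 1 →
      Xhat (U * S * Vᵀ) = U * Xhat S * Uᵀ := by
  intro U V S hU1 hU2 hV1 hV2
  have hUdet : |U.det| = 1 := by
    have h := congrArg Matrix.det hU1
    rw [Matrix.det_mul, Matrix.det_transpose, Matrix.det_one] at h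
    rcases mul_self_eq_one_iff.mp h with h' | h' <;> simp [h']
  have hVdet : |V.det| = 1 := by
    have h := congrArg Matrix.det hV1
    rw [Matrix.det_mul, Matrix.det_transpose, Matrix.det_one] at h
    rcases mul_self_eq_one_iff.mp h with h' | h' <;> simp [h']
  have hUt1 : Uᵀ * Uᵀᵀ = 1 := by rwa [Matrix.transpose_transpose]
  have hUt2 : Uᵀᵀ * Uᵀ = 1 := by rwa [Matrix.transpose_transpose]
  set e1 : (Fin N → Fin N → ℝ) ≃ₗ[ℝ] (Fin N → Fin N → ℝ) :=
    (RIEAux.rmulLinEquiv Uᵀ U hU2 hU1).trans (RIEAux.lmulLinEquiv U Uᵀ hU1 hU2) with he1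
  set e2 : (Fin N → Fin M → ℝ) ≃ₗ[ℝ] (Fin N → Fin M → ℝ) :=
    (RIEAux.rmulLinEquiv Vᵀ V hV2 hV1).trans (RIEAux.lmulLinEquiv U Uᵀ hU1 hU2) with he2
  have happ1 : ∀ x : Fin N → Fin N → ℝ, Matrix.of (e1 x) = U * Matrix.of x * Uᵀ := by
    intro x
    show Matrix.of (RIEAux.lmulLinEquiv U Uᵀ hU1 hU2 (RIEAux.rmulLinEquiv Uᵀ U hU2 hU1 x)) = _
    rw [RIEAux.lmulLinEquiv_apply, RIEAux.rmulLinEquiv_apply, Matrix.mul_assoc]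
  have happ2 : ∀ x : Fin N → Fin M → ℝ, Matrix.of (e2 x) = U * Matrix.of x * Vᵀ := by
    intro x
    show Matrix.of (RIEAux.lmulLinEquiv U Uᵀ hU1 hU2 (RIEAux.rmulLinEquiv Vᵀ V hV2 hV1 x)) = _
    rw [RIEAux.lmulLinEquiv_apply, RIEAux.rmulLinEquiv_apply, Matrix.mul_assoc]
  have mp1 : MeasurePreserving (⇑e1) volume volume := by
    rw [he1]
    exact (RIEAux.mp_lmul U Uᵀ hU1 hU2 hUdet).comp
      (RIEAux.mp_rmul Uᵀ U hU2 hU1 (by rwa [Matrix.det_transpose]))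
  have mp2 : MeasurePreserving (⇑e2) volume volume := by
    rw [he2]
    exact (RIEAux.mp_lmul U Uᵀ hU1 hU2 hUdet).comp
      (RIEAux.mp_rmul Vᵀ V hV2 hV1 (by rwa [Matrix.det_transpose]))
  have hT : MeasurePreserving (⇑(e1.prodCongr e2)) volume volume := by
    have h := mp1.prod mp2
    rw [← Measure.volume_eq_prod] at h
    exact h
  have hTemb : MeasurableEmbedding (⇑(e1.prodCongr e2)) :=
    (e1.prodCongr e2).toContinuousLinearEquiv.toHomeomorph.measurableEmbedding
  have key : ∀ g : (Fin N → Fin N → ℝ) × (Fin N → Fin M → ℝ) → ℝ,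
      (∫ p, g ((e1.prodCongr e2) p)) = ∫ p, g p := fun g => hT.integral_comp hTemb g
  have hprod : ∀ p : (Fin N → Fin N → ℝ) × (Fin N → Fin M → ℝ),
      pX (Matrix.of ((e1.prodCongr e2) p).1) * pY (Matrix.of ((e1.prodCongr e2) p).2) *
        pW (U * S * Vᵀ - Matrix.of ((e1.prodCongr e2) p).1 * Matrix.of ((e1.prodCongr e2) p).2)
      = pX (Matrix.of p.1) * pY (Matrix.of p.2) *
          pW (S - Matrix.of p.1 * Matrix.of p.2) := by
    intro p
    simp only [LinearEquiv.prodCongr_apply]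
    rw [happ1, happ2, hpX U hU1 hU2, hpY U V hU1 hU2 hV1 hV2]
    congr 1
    have hmul : (U * Matrix.of p.1 * Uᵀ) * (U * Matrix.of p.2 * Vᵀ)
        = U * (Matrix.of p.1 * Matrix.of p.2) * Vᵀ := by
      have h : (U * Matrix.of p.1 * Uᵀ) * (U * Matrix.of p.2 * Vᵀ)
          = U * Matrix.of p.1 * (Uᵀ * U) * Matrix.of p.2 * Vᵀ := by
        simp only [Matrix.mul_assoc]
      rw [h, hU2, Matrix.mul_one, Matrix.mul_assoc U]
    rw [hmul, ← Matrix.sub_mul, ← Matrix.mul_sub]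
    exact hpW U V hU1 hU2 hV1 hV2 _
  have hden : (∫ p : (Fin N → Fin N → ℝ) × (Fin N → Fin M → ℝ),
        pX (Matrix.of p.1) * pY (Matrix.of p.2) *
          pW (U * S * Vᵀ - Matrix.of p.1 * Matrix.of p.2))
      = ∫ p : (Fin N → Fin N → ℝ) × (Fin N → Fin M → ℝ),
          pX (Matrix.of p.1) * pY (Matrix.of p.2) *
            pW (S - Matrix.of p.1 * Matrix.of p.2) := by
    rw [← key (fun p => pX (Matrix.of p.1) * pY (Matrix.of p.2) *
      pW (U * S * Vᵀ - Matrix.of p.1 * Matrix.of p.2))]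
    exact integral_congr_ae (Filter.Eventually.of_forall hprod)
  have hnum : ∀ i j : Fin N,
      (∫ p : (Fin N → Fin N → ℝ) × (Fin N → Fin M → ℝ),
        pX (Matrix.of p.1) * pY (Matrix.of p.2) *
          pW (U * S * Vᵀ - Matrix.of p.1 * Matrix.of p.2) * p.1 i j)
      = ∑ k, ∑ l, (U i l * U j k) *
          (∫ p : (Fin N → Fin N → ℝ) × (Fin N → Fin M → ℝ),
            pX (Matrix.of p.1) * pY (Matrix.of p.2) *
              pW (S - Matrix.of p.1 * Matrix.of p.2) * p.1 l k) := by
    intro i j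
    rw [← key (fun p => pX (Matrix.of p.1) * pY (Matrix.of p.2) *
      pW (U * S * Vᵀ - Matrix.of p.1 * Matrix.of p.2) * p.1 i j)]
    have step : ∀ p : (Fin N → Fin N → ℝ) × (Fin N → Fin M → ℝ),
        pX (Matrix.of ((e1.prodCongr e2) p).1) * pY (Matrix.of ((e1.prodCongr e2) p).2) *
          pW (U * S * Vᵀ - Matrix.of ((e1.prodCongr e2) p).1 * Matrix.of ((e1.prodCongr e2) p).2) *
            ((e1.prodCongr e2) p).1 i j
        = ∑ k, ∑ l, (U i l * U j k) *
            (pX (Matrix.of p.1) * pY (Matrix.of p.2) *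
              pW (S - Matrix.of p.1 * Matrix.of p.2) * p.1 l k) := by
      intro p
      rw [hprod p]
      have h1 : ((e1.prodCongr e2) p).1 i j = (U * Matrix.of p.1 * Uᵀ) i j := by
        have := congrFun (congrFun (congrArg (fun A => (A : Fin N → Fin N → ℝ)) (happ1 p.1)) i) j
        simpa using this
      rw [h1, Matrix.mul_apply, Finset.mul_sum]
      refine Finset.sum_congr rfl fun k _ => ?_
      rw [Matrix.mul_apply, Matrix.transpose_apply, Finset.sum_mul, Finset.mul_sum]
      refine Finset.sum_congr rfl fun l _ => ?_
      simp only [Matrix.of_apply]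
      ring
    rw [show (fun p : (Fin N → Fin N → ℝ) × (Fin N → Fin M → ℝ) =>
        pX (Matrix.of ((e1.prodCongr e2) p).1) * pY (Matrix.of ((e1.prodCongr e2) p).2) *
          pW (U * S * Vᵀ - Matrix.of ((e1.prodCongr e2) p).1 * Matrix.of ((e1.prodCongr e2) p).2) *
            ((e1.prodCongr e2) p).1 i j)
      = fun p => ∑ k, ∑ l, (U i l * U j k) *
          (pX (Matrix.of p.1) * pY (Matrix.of p.2) *
            pW (S - Matrix.of p.1 * Matrix.of p.2) * p.1 l k) from funext step]
    rw [integral_finset_sum _ (fun k _ => integrable_finset_sum _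
      (fun l _ => (hInt1 S l k).const_mul (U i l * U j k)))]
    refine Finset.sum_congr rfl fun k _ => ?_
    rw [integral_finset_sum _ (fun l _ => (hInt1 S l k).const_mul (U i l * U j k))]
    refine Finset.sum_congr rfl fun l _ => ?_
    exact integral_const_mul _ _
  ext i j
  rw [hXhat (U * S * Vᵀ) i j, hden, hnum i j, Matrix.mul_apply]
  rw [Finset.sum_div]
  refine Finset.sum_congr rfl fun k _ => ?_
  rw [Matrix.mul_apply, Matrix.transpose_apply, Finset.sum_mul, Finset.sum_div]
  refine Finset.sum_congr rfl fun l _ => ?_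
  rw [hXhat S l k, mul_div_assoc]
  ring
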